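/- (Theorem 1, maximal version) Suppose that for every Krein space every J-isometry has a maximal positive invariant subspace. Then for every Krein space every J-noncontraction has a maximal positive invariant subspace. -/

import Mathlib

set_option linter.unusedSectionVars false
noncomputable section
variable {E : Type*} [NormedAddCommGroup E] [InnerProductSpace ℂ E] [CompleteSpace E]

def KP (J : E →L[ℂ] E) : E →L[ℂ] E := (2⁻¹ : ℂ) • (1 + J)
def KM (J : E →L[ℂ] E) : E →L[ℂ] E := (2⁻¹ : ℂ) • (1 - J)

theorem KP_add_KM (J : E →L[ℂ] E) (x : E) : KP J x + KM J x = x := by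
  simp [KP, KM, smul_smul]; module

theorem J_KP (J : E →L[ℂ] E) (hJ2 : J ∘L J = 1) (x : E) : J (KP J x) = KP J x := by
  have h : J (J x) = x := congrFun (congrArg DFunLike.coe hJ2) x
  simp [KP, h, add_comm]

theorem J_KM (J : E →L[ℂ] E) (hJ2 : J ∘L J = 1) (x : E) : J (KM J x) = -(KM J x) := by
  have h : J (J x) = x := congrFun (congrArg DFunLike.coe hJ2) x
  simp only [KM, ContinuousLinearMap.smul_apply, ContinuousLinearMap.sub_apply,
    ContinuousLinearMap.one_apply, map_smul, map_sub, h]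
  module

theorem KP_eq_self (J : E →L[ℂ] E) {x : E} (hx : J x = x) : KP J x = x := by
  simp [KP, hx, smul_smul]; module

theorem J_apply_eq (J : E →L[ℂ] E) (x : E) :
    J x = KP J x - KM J x := by
  simp [KP, KM, smul_sub, smul_add]; module

theorem inner_KP_KM (J : E →L[ℂ] E) (hJ : IsSelfAdjoint J) (hJ2 : J ∘L J = 1) (x y : E) :
    (inner ℂ (KP J x) (KM J y) : ℂ) = 0 := by
  have hsym := hJ.isSymmetric
  have h2 : (inner ℂ (J (KP J x)) (KM J y) : ℂ) = inner ℂ (KP J x) (J (KM J y)) := hsym _ _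
  rw [J_KP J hJ2, J_KM J hJ2, inner_neg_right] at h2
  have : (2 : ℂ) * inner ℂ (KP J x) (KM J y) = 0 := by linear_combination h2
  simpa using this

theorem inner_J_self (J : E →L[ℂ] E) (hJ : IsSelfAdjoint J) (hJ2 : J ∘L J = 1) (x : E) :
    (inner ℂ x (J x) : ℂ) = (‖KP J x‖ ^ 2 : ℝ) - (‖KM J x‖ ^ 2 : ℝ) := by
  have hx : x = KP J x + KM J x := (KP_add_KM J x).symm
  calc (inner ℂ x (J x) : ℂ) = inner ℂ (KP J x + KM J x) (KP J x - KM J x) := by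
        rw [← hx, ← J_apply_eq J x]
    _ = inner ℂ (KP J x) (KP J x) - inner ℂ (KP J x) (KM J x)
        + (inner ℂ (KM J x) (KP J x) - inner ℂ (KM J x) (KM J x)) := by
        rw [inner_add_left, inner_sub_right, inner_sub_right]
    _ = (‖KP J x‖ ^ 2 : ℝ) - (‖KM J x‖ ^ 2 : ℝ) := by
        have hz : (inner ℂ (KM J x) (KP J x) : ℂ) = 0 := by
          rw [← inner_conj_symm, inner_KP_KM J hJ hJ2, map_zero]
        rw [inner_KP_KM J hJ hJ2, hz, inner_self_eq_norm_sq_to_K, inner_self_eq_norm_sq_to_K]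
        simp [sub_eq_add_neg]

theorem inner_J_self_re (J : E →L[ℂ] E) (hJ : IsSelfAdjoint J) (hJ2 : J ∘L J = 1) (x : E) :
    (inner ℂ x (J x) : ℂ).re = ‖KP J x‖ ^ 2 - ‖KM J x‖ ^ 2 := by
  rw [inner_J_self J hJ hJ2]
  simp [← Complex.ofReal_pow]

theorem norm_KM_le (J : E →L[ℂ] E) (hJ : IsSelfAdjoint J) (hJ2 : J ∘L J = 1) {x : E}
    (hx : 0 ≤ (inner ℂ x (J x) : ℂ).re) : ‖KM J x‖ ≤ ‖KP J x‖ := by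
  rw [inner_J_self_re J hJ hJ2] at hx
  nlinarith [norm_nonneg (KM J x), norm_nonneg (KP J x)]

theorem eq_zero_of_KP_eq_zero (J : E →L[ℂ] E) (hJ : IsSelfAdjoint J) (hJ2 : J ∘L J = 1) {x : E}
    (hx : 0 ≤ (inner ℂ x (J x) : ℂ).re) (h0 : KP J x = 0) : x = 0 := by
  have h1 := norm_KM_le J hJ hJ2 hx
  rw [h0, norm_zero] at h1
  have h2 : KM J x = 0 := norm_le_zero_iff.mp h1
  have := KP_add_KM J x
  rw [h0, h2, add_zero] at this
  exact this.symm

theorem maximal_of_KP_surj (J : E →L[ℂ] E) (hJ : IsSelfAdjoint J) (hJ2 : J ∘L J = 1)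
    (L : Submodule ℂ E) (hL : ∀ x ∈ L, 0 ≤ (inner ℂ x (J x) : ℂ).re)
    (hsurj : ∀ u : E, J u = u → ∃ x ∈ L, KP J x = u) :
    ∀ M : Submodule ℂ E, (∀ x ∈ M, 0 ≤ (inner ℂ x (J x) : ℂ).re) → L ≤ M → M = L := by
  intro M hM hLM
  refine le_antisymm (fun m hm => ?_) hLM
  have hJu : J (KP J m) = KP J m := J_KP J hJ2 m
  obtain ⟨x, hxL, hx⟩ := hsurj (KP J m) hJu
  have hmx : m - x ∈ M := sub_mem hm (hLM hxL)
  have hKP0 : KP J (m - x) = 0 := by rw [map_sub, hx, sub_self]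
  have : m - x = 0 := eq_zero_of_KP_eq_zero J hJ hJ2 (hM _ hmx) hKP0
  have hmx2 : m = x := by rwa [sub_eq_zero] at this
  rwa [hmx2]

theorem KP_surj_of_maximal (J : E →L[ℂ] E) (hJ : IsSelfAdjoint J) (hJ2 : J ∘L J = 1)
    (L : Submodule ℂ E) (hL : ∀ x ∈ L, 0 ≤ (inner ℂ x (J x) : ℂ).re)
    (hmax : ∀ M : Submodule ℂ E, (∀ x ∈ M, 0 ≤ (inner ℂ x (J x) : ℂ).re) → L ≤ M → M = L) :
    ∀ u : E, J u = u → ∃ x ∈ L, KP J x = u := by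
  intro u hu
  classical
  set S : Submodule ℂ E := L.map (KP J : E →ₗ[ℂ] E) with hS
  set C : Submodule ℂ E := S.topologicalClosure with hC
  haveI : CompleteSpace C := (Submodule.isClosed_topologicalClosure S).completeSpace_coe
  have hCfix : ∀ w ∈ C, J w = w := by
    have hclosed : IsClosed {w : E | J w = w} := isClosed_eq J.continuous continuous_id
    have hsub : (S : Set E) ⊆ {w : E | J w = w} := by
      rintro w ⟨x, -, rfl⟩
      exact J_KP J hJ2 x
    intro w hw
    exact closure_minimal hsub hclosed hw
  set c : E := (C.orthogonalProjectionOnto u : E) with hc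
  have hcC : c ∈ C := SetLike.coe_mem _
  have hdorth : u - c ∈ Cᗮ := Submodule.sub_starProjection_mem_orthogonal (K := C) u
  set d : E := u - c with hd
  have hJd : J d = d := by rw [hd, map_sub, hu, hCfix c hcC]
  -- key orthogonality facts for d
  have hinner_L_d : ∀ x ∈ L, (inner ℂ x d : ℂ) = 0 ∧ (inner ℂ d (J x) : ℂ) = 0 := by
    intro x hx
    have h1 : (inner ℂ (KP J x) d : ℂ) = 0 :=
      (Submodule.mem_orthogonal _ _).mp hdorth _
        (Submodule.le_topologicalClosure S ⟨x, hx, rfl⟩)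
    have h2 : (inner ℂ (KM J x) d : ℂ) = 0 := by
      have : d = KP J d := (KP_eq_self J hJd).symm
      rw [this, ← inner_conj_symm, inner_KP_KM J hJ hJ2, map_zero]
    constructor
    · rw [← KP_add_KM J x, inner_add_left, h1, h2, add_zero]
    · rw [J_apply_eq J x, inner_sub_right, ← inner_conj_symm d (KP J x), h1,
        ← inner_conj_symm d (KM J x), h2, map_zero, sub_zero]
  -- positivity of adding a multiple of a J-fixed vector orthogonal as above
  have hpos_span : ∀ x ∈ L, ∀ a : ℂ, 0 ≤ (inner ℂ (x + a • d) (J (x + a • d)) : ℂ).re := by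
    intro x hx a
    obtain ⟨h1, h2⟩ := hinner_L_d x hx
    have hcalc : (inner ℂ (x + a • d) (J (x + a • d)) : ℂ)
        = inner ℂ x (J x) + inner ℂ (a • d) (a • d) := by
      rw [map_add, map_smul, hJd]
      rw [inner_add_left, inner_add_right, inner_add_right]
      rw [inner_smul_right, h1, inner_smul_left, h2]
      ring
    rw [hcalc, Complex.add_re]
    have : (inner ℂ (a • d) (a • d) : ℂ).re = ‖a • d‖ ^ 2 := by
      rw [inner_self_eq_norm_sq_to_K]; norm_cast
    rw [this]
    have := hL x hx
    positivity
  have hd0 : d = 0 := by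
    have hpos' : ∀ y ∈ L ⊔ Submodule.span ℂ {d}, 0 ≤ (inner ℂ y (J y) : ℂ).re := by
      intro y hy
      obtain ⟨x, hx, z, hz, rfl⟩ := Submodule.mem_sup.mp hy
      obtain ⟨a, rfl⟩ := Submodule.mem_span_singleton.mp hz
      exact hpos_span x hx a
    have heq := hmax _ hpos' le_sup_left
    have hdL : d ∈ L := heq ▸ Submodule.mem_sup_right (Submodule.mem_span_singleton_self d)
    have hdC : d ∈ C := Submodule.le_topologicalClosure S ⟨d, hdL, KP_eq_self J hJd⟩
    have : (inner ℂ d d : ℂ) = 0 := (Submodule.mem_orthogonal _ _).mp hdorth _ hdC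
    exact inner_self_eq_zero.mp this
  have huC : u ∈ closure (S : Set E) := by
    have : u = c := by rw [← sub_eq_zero]; exact hd0
    rw [this]
    have hmem : c ∈ (S.topologicalClosure : Set E) := hcC
    rwa [Submodule.topologicalClosure_coe] at hmem
  obtain ⟨y, hyS, hytend⟩ := mem_closure_iff_seq_limit.mp huC
  choose x hxL hxKP using fun n => Submodule.mem_map.mp (hyS n)
  -- the negative parts form a Cauchy sequence
  have hcauchy : CauchySeq fun n => KM J (x n) := by
    have hyC : CauchySeq y := hytend.cauchySeq
    rw [Metric.cauchySeq_iff] at hyC ⊢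
    intro ε hε
    obtain ⟨N, hN⟩ := hyC ε hε
    refine ⟨N, fun m hm n hn => ?_⟩
    have hsub : x m - x n ∈ L := sub_mem (hxL m) (hxL n)
    have hle : ‖KM J (x m - x n)‖ ≤ ‖KP J (x m - x n)‖ :=
      norm_KM_le J hJ hJ2 (hL _ hsub)
    have h1 : dist (KM J (x m)) (KM J (x n)) = ‖KM J (x m - x n)‖ := by
      rw [dist_eq_norm, map_sub]
    have h2 : ‖KP J (x m - x n)‖ = dist (y m) (y n) := by
      rw [dist_eq_norm, map_sub, ← ContinuousLinearMap.coe_coe (KP J), hxKP m, hxKP n]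
    calc dist (KM J (x m)) (KM J (x n)) ≤ dist (y m) (y n) := by
          rw [h1, ← h2]; exact hle
      _ < ε := hN m hm n hn
  obtain ⟨w, hw⟩ := cauchySeq_tendsto_of_complete hcauchy
  set v : E := u + w with hv
  have hxtend : Filter.Tendsto x Filter.atTop (nhds v) := by
    have heq : ∀ n, y n + KM J (x n) = x n := by
      intro n; rw [← hxKP n]; exact KP_add_KM J (x n)
    exact (hytend.add hw).congr heq
  -- L ⊔ span v is positive
  have hgcont : Continuous fun e : E => (inner ℂ e (J e) : ℂ).re :=
    Complex.continuous_re.comp (continuous_id.inner J.continuous)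
  have hpos' : ∀ z ∈ L ⊔ Submodule.span ℂ {v}, 0 ≤ (inner ℂ z (J z) : ℂ).re := by
    intro z hz
    obtain ⟨p, hp, q, hq, rfl⟩ := Submodule.mem_sup.mp hz
    obtain ⟨a, rfl⟩ := Submodule.mem_span_singleton.mp hq
    have hseq : Filter.Tendsto (fun n => p + a • x n) Filter.atTop (nhds (p + a • v)) :=
      (tendsto_const_nhds.add (hxtend.const_smul a))
    have hvals : ∀ n, 0 ≤ (inner ℂ (p + a • x n) (J (p + a • x n)) : ℂ).re := by
      intro n
      exact hL _ (add_mem hp (Submodule.smul_mem L a (hxL n)))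
    exact ge_of_tendsto ((hgcont.tendsto _).comp hseq) (Filter.Eventually.of_forall hvals)
  have heq := hmax _ hpos' le_sup_left
  have hvL : v ∈ L := heq ▸ Submodule.mem_sup_right (Submodule.mem_span_singleton_self v)
  refine ⟨v, hvL, ?_⟩
  have h1 : Filter.Tendsto (fun n => KP J (x n)) Filter.atTop (nhds (KP J v)) :=
    ((KP J).continuous.tendsto v).comp hxtend
  have h2 : Filter.Tendsto (fun n => KP J (x n)) Filter.atTop (nhds u) := by
    have : ∀ n, y n = KP J (x n) := fun n => (hxKP n).symm
    exact hytend.congr this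
  exact tendsto_nhds_unique h1 h2

end

section Construction
open scoped ENNReal
noncomputable section
variable {E : Type} [NormedAddCommGroup E] [InnerProductSpace ℂ E] [CompleteSpace E]

local notation "FF" => lp (fun _ : ℕ => E) 2

def consFun (a : E) (f : FF) : ∀ _ : ℕ, E :=
  fun n => Nat.casesOn n a fun k => f k

theorem consFun_hasSum (a : E) (f : FF) :
    HasSum (fun n => ‖consFun a f n‖ ^ (2 : ℝ≥0∞).toReal)
      (‖f‖ ^ (2 : ℝ≥0∞).toReal + ‖a‖ ^ (2 : ℝ≥0∞).toReal) := by
  have hp : (0 : ℝ) < (2 : ℝ≥0∞).toReal := by norm_num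
  have h := lp.hasSum_norm hp f
  have h2 : HasSum (fun n => ‖consFun a f (n + 1)‖ ^ (2 : ℝ≥0∞).toReal)
      (‖f‖ ^ (2 : ℝ≥0∞).toReal) := h
  have h3 := (hasSum_nat_add_iff (f := fun n => ‖consFun a f n‖ ^ (2 : ℝ≥0∞).toReal) 1).mp h2
  simpa [consFun] using h3

theorem consFun_memℓp (a : E) (f : FF) : Memℓp (consFun a f) 2 :=
  memℓp_gen (consFun_hasSum a f).summable

def cons (a : E) (f : FF) : FF := ⟨consFun a f, consFun_memℓp a f⟩

theorem norm_cons_sq (a : E) (f : FF) : ‖cons a f‖ ^ 2 = ‖a‖ ^ 2 + ‖f‖ ^ 2 := by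
  have hp : (0 : ℝ) < (2 : ℝ≥0∞).toReal := by norm_num
  have h1 := lp.hasSum_norm hp (cons a f)
  have h2 := consFun_hasSum a f
  have h3 : ‖cons a f‖ ^ (2 : ℝ≥0∞).toReal
      = ‖f‖ ^ (2 : ℝ≥0∞).toReal + ‖a‖ ^ (2 : ℝ≥0∞).toReal := h1.unique h2
  have ht : (2 : ℝ≥0∞).toReal = (2 : ℝ) := by norm_num
  rw [ht] at h3
  rw [Real.rpow_two, Real.rpow_two, Real.rpow_two] at h3
  linarith

theorem cons_apply_zero (a : E) (f : FF) : (cons a f : ∀ _ : ℕ, E) 0 = a := rfl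
theorem cons_apply_succ (a : E) (f : FF) (n : ℕ) :
    (cons a f : ∀ _ : ℕ, E) (n + 1) = f n := rfl

def consL : (E × FF) →L[ℂ] FF :=
  LinearMap.mkContinuous
    { toFun := fun af => cons af.1 af.2
      map_add' := by
        rintro ⟨a, f⟩ ⟨b, g⟩
        apply lp.ext
        funext n
        cases n with
        | zero => simp [lp.coeFn_add, cons_apply_zero]
        | succ k => simp [lp.coeFn_add, cons_apply_succ]
      map_smul' := by
        rintro c ⟨a, f⟩
        apply lp.ext
        funext n
        cases n with
        | zero => simp [lp.coeFn_smul, cons_apply_zero]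
        | succ k => simp [lp.coeFn_smul, cons_apply_succ] }
    2
    (by
      rintro ⟨a, f⟩
      show ‖cons a f‖ ≤ 2 * ‖(a, f)‖
      have h := norm_cons_sq a f
      have h1 : ‖a‖ ≤ ‖(a, f)‖ := le_max_left _ _
      have h2 : ‖f‖ ≤ ‖(a, f)‖ := le_max_right _ _
      have h3 : (0:ℝ) ≤ ‖(a, f)‖ := norm_nonneg _
      have h4 : (0:ℝ) ≤ ‖cons a f‖ := norm_nonneg _
      nlinarith [norm_nonneg a, norm_nonneg f])

theorem consL_apply (a : E) (f : FF) : consL (a, f) = cons a f := rfl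

local notation "Et" => WithLp 2 (E × FF)

def prodEq : Et ≃L[ℂ] E × FF := WithLp.prodContinuousLinearEquiv 2 ℂ E FF

theorem Et_ext {z w : Et} (h1 : z.fst = w.fst) (h2 : z.snd = w.snd) : z = w :=
  (prodEq (E := E)).injective (Prod.ext h1 h2)

def Jt (J : E →L[ℂ] E) : Et →L[ℂ] Et :=
  ((prodEq (E := E)).symm : (E × FF) →L[ℂ] Et) ∘L
    ((J.prodMap (-1)) ∘L ((prodEq (E := E)) : Et →L[ℂ] (E × FF)))

theorem Jt_fst (J : E →L[ℂ] E) (z : Et) : (Jt J z).fst = J z.fst := rfl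
theorem Jt_snd (J : E →L[ℂ] E) (z : Et) : (Jt J z).snd = -z.snd := rfl

theorem inner_Jt (J : E →L[ℂ] E) (z w : Et) :
    (inner ℂ z (Jt J w) : ℂ) = inner ℂ z.fst (J w.fst) - inner ℂ z.snd w.snd := by
  rw [WithLp.prod_inner_apply]
  change inner ℂ z.fst (Jt J w).fst + inner ℂ z.snd (Jt J w).snd = _
  rw [Jt_fst, Jt_snd, inner_neg_right]
  ring

theorem Jt_selfAdjoint (J : E →L[ℂ] E) (hJ : IsSelfAdjoint J) : IsSelfAdjoint (Jt J) := by
  rw [ContinuousLinearMap.isSelfAdjoint_iff_isSymmetric]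
  intro z w
  have hsym := hJ.isSymmetric
  simp only [ContinuousLinearMap.coe_coe]
  rw [WithLp.prod_inner_apply, WithLp.prod_inner_apply]
  change inner ℂ (Jt J z).fst w.fst + inner ℂ (Jt J z).snd w.snd
    = inner ℂ z.fst (Jt J w).fst + inner ℂ z.snd (Jt J w).snd
  rw [Jt_fst, Jt_snd, Jt_fst, Jt_snd,
    inner_neg_left, inner_neg_right]
  rw [show (inner ℂ (J z.fst) w.fst : ℂ) = inner ℂ z.fst (J w.fst) from hsym z.fst w.fst]

theorem Jt_sq (J : E →L[ℂ] E) (hJ2 : J ∘L J = 1) : Jt J ∘L Jt J = 1 := by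
  ext z
  have h : J (J z.fst) = z.fst := congrFun (congrArg DFunLike.coe hJ2) z.fst
  refine Et_ext ?_ ?_
  · simp [ContinuousLinearMap.comp_apply, Jt_fst, h]
  · simp [ContinuousLinearMap.comp_apply, Jt_snd]

def Vt (T D : E →L[ℂ] E) : Et →L[ℂ] Et :=
  ((prodEq (E := E)).symm : (E × FF) →L[ℂ] Et) ∘L
    (((T.comp (ContinuousLinearMap.fst ℂ E FF)).prod
        (consL.comp ((D.comp (ContinuousLinearMap.fst ℂ E FF)).prod
          (ContinuousLinearMap.snd ℂ E FF)))) ∘L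
      ((prodEq (E := E)) : Et →L[ℂ] (E × FF)))

theorem Vt_fst (T D : E →L[ℂ] E) (z : Et) : (Vt T D z).fst = T z.fst := rfl
theorem Vt_snd (T D : E →L[ℂ] E) (z : Et) : (Vt T D z).snd = cons (D z.fst) z.snd := rfl

theorem Vt_isometry (J T D : E →L[ℂ] E)
    (key : ∀ x : E, (inner ℂ (D x) (D x) : ℂ) = inner ℂ (T x) (J (T x)) - inner ℂ x (J x))
    (z : Et) : (inner ℂ (Vt T D z) (Jt J (Vt T D z)) : ℂ) = inner ℂ z (Jt J z) := by
  rw [inner_Jt, inner_Jt, Vt_fst, Vt_snd]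
  have h1 : (inner ℂ (cons (D z.fst) z.snd) (cons (D z.fst) z.snd) : ℂ)
      = inner ℂ (D z.fst) (D z.fst) + inner ℂ z.snd z.snd := by
    rw [inner_self_eq_norm_sq_to_K, inner_self_eq_norm_sq_to_K, inner_self_eq_norm_sq_to_K]
    norm_cast
    exact norm_cons_sq _ _
  rw [h1, key z.fst]
  ring

open ContinuousLinearMap in
theorem exists_defect (J T : E →L[ℂ] E) (hJ : IsSelfAdjoint J)
    (hT : ∀ x : E, (inner ℂ x (J x) : ℂ).re ≤ (inner ℂ (T x) (J (T x)) : ℂ).re) :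
    ∃ D : E →L[ℂ] E,
      ∀ x : E, (inner ℂ (D x) (D x) : ℂ) = inner ℂ (T x) (J (T x)) - inner ℂ x (J x) := by
  set Q : E →L[ℂ] E := (adjoint T) ∘L (J ∘L T) - J with hQdef
  have hQsa : IsSelfAdjoint Q := (hJ.adjoint_conj T).sub hJ
  have hQapp : ∀ x : E, (inner ℂ x (Q x) : ℂ) = inner ℂ (T x) (J (T x)) - inner ℂ x (J x) := by
    intro x
    have : Q x = adjoint T (J (T x)) - J x := rfl
    rw [this, inner_sub_right, adjoint_inner_right]
  have hQpos : 0 ≤ Q := by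
    rw [ContinuousLinearMap.nonneg_iff_isPositive]
    refine ⟨hQsa.isSymmetric, fun x => ?_⟩
    have h3 : Q.reApplyInnerSelf x = (inner ℂ (Q x) x : ℂ).re := rfl
    have h4 : (inner ℂ (Q x) x : ℂ).re = (inner ℂ x (Q x) : ℂ).re := by
      rw [← inner_conj_symm x (Q x), Complex.conj_re]
    rw [h3, h4, hQapp x, Complex.sub_re]
    have := hT x
    linarith
  refine ⟨CFC.sqrt Q, fun x => ?_⟩
  have hDpos : (0 : E →L[ℂ] E) ≤ CFC.sqrt Q := CFC.sqrt_nonneg Q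
  have hDsa : IsSelfAdjoint (CFC.sqrt Q) :=
    ((ContinuousLinearMap.nonneg_iff_isPositive _).mp hDpos).isSelfAdjoint
  have hDD : CFC.sqrt Q * CFC.sqrt Q = Q := CFC.sqrt_mul_sqrt_self Q hQpos
  have h4 : (inner ℂ (CFC.sqrt Q x) (CFC.sqrt Q x) : ℂ) = inner ℂ x (Q x) := by
    rw [← ContinuousLinearMap.adjoint_inner_right]
    rw [← ContinuousLinearMap.star_eq_adjoint, hDsa.star_eq]
    congr 1
    rw [← ContinuousLinearMap.mul_apply, hDD]
  rw [h4, hQapp]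

theorem KP_Jt_fst (J : E →L[ℂ] E) (z : Et) : (KP (Jt J) z).fst = KP J z.fst := by
  show ((2⁻¹ : ℂ) • (z + Jt J z)).fst = (2⁻¹ : ℂ) • (z.fst + J z.fst)
  rw [WithLp.smul_fst, WithLp.add_fst, Jt_fst]

theorem KP_Jt_snd (J : E →L[ℂ] E) (z : Et) : (KP (Jt J) z).snd = 0 := by
  show ((2⁻¹ : ℂ) • (z + Jt J z)).snd = 0
  rw [WithLp.smul_snd, WithLp.add_snd, Jt_snd, add_neg_cancel, smul_zero]

end


/-- Theorem 1, maximal version: if in every Krein space every J-isometry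
has a maximal positive invariant subspace, then in every Krein space every
J-noncontraction has a maximal positive invariant subspace. -/
theorem isometry_maximal_invariant_implies_noncontraction_maximal_invariant
    (hyp : ∀ (E : Type) [NormedAddCommGroup E] [InnerProductSpace ℂ E] [CompleteSpace E]
      (J V : E →L[ℂ] E), IsSelfAdjoint J → J ∘L J = 1 →
      (∀ x : E, (inner ℂ (V x) (J (V x)) : ℂ) = inner ℂ x (J x)) →
      ∃ L : Submodule ℂ E, (∀ x ∈ L, 0 ≤ (inner ℂ x (J x) : ℂ).re) ∧
        (∀ M : Submodule ℂ E, (∀ x ∈ M, 0 ≤ (inner ℂ x (J x) : ℂ).re) → L ≤ M → M = L) ∧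
        ∀ x ∈ L, V x ∈ L) :
    ∀ (E : Type) [NormedAddCommGroup E] [InnerProductSpace ℂ E] [CompleteSpace E]
      (J T : E →L[ℂ] E), IsSelfAdjoint J → J ∘L J = 1 →
      (∀ x : E, (inner ℂ x (J x) : ℂ).re ≤ (inner ℂ (T x) (J (T x)) : ℂ).re) →
      ∃ L : Submodule ℂ E, (∀ x ∈ L, 0 ≤ (inner ℂ x (J x) : ℂ).re) ∧
        (∀ M : Submodule ℂ E, (∀ x ∈ M, 0 ≤ (inner ℂ x (J x) : ℂ).re) → L ≤ M → M = L) ∧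
        ∀ x ∈ L, T x ∈ L := by
  intro E _ _ _ J T hJ hJ2 hT
  obtain ⟨D, key⟩ := exists_defect J T hJ hT
  obtain ⟨Lt, hLtpos, hLtmax, hLtinv⟩ :=
    hyp (WithLp 2 (E × lp (fun _ : ℕ => E) 2)) (Jt J) (Vt T D)
      (Jt_selfAdjoint J hJ) (Jt_sq J hJ2) (Vt_isometry J T D key)
  set π : WithLp 2 (E × lp (fun _ : ℕ => E) 2) →L[ℂ] E :=
    (ContinuousLinearMap.fst ℂ E (lp (fun _ : ℕ => E) 2)) ∘L
      ((prodEq (E := E)) : WithLp 2 (E × lp (fun _ : ℕ => E) 2) →L[ℂ]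
        (E × lp (fun _ : ℕ => E) 2)) with hπ
  have hπapp : ∀ z, π z = z.fst := fun z => rfl
  set L : Submodule ℂ E := Lt.map (π : WithLp 2 (E × lp (fun _ : ℕ => E) 2) →ₗ[ℂ] E) with hLdef
  have hLpos : ∀ x ∈ L, 0 ≤ (inner ℂ x (J x) : ℂ).re := by
    rintro x ⟨z, hz, rfl⟩
    have h1 := hLtpos z hz
    rw [inner_Jt] at h1
    have h2 : (inner ℂ z.snd z.snd : ℂ).re = ‖z.snd‖ ^ 2 := by
      rw [inner_self_eq_norm_sq_to_K]
      simp [← Complex.ofReal_pow]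
    rw [Complex.sub_re, h2] at h1
    rw [ContinuousLinearMap.coe_coe, hπapp]
    nlinarith [sq_nonneg ‖z.snd‖]
  have hLinv : ∀ x ∈ L, T x ∈ L := by
    rintro x ⟨z, hz, rfl⟩
    exact ⟨Vt T D z, hLtinv z hz, rfl⟩
  have hsurj : ∀ u : E, J u = u → ∃ x ∈ L, KP J x = u := by
    intro u hu
    set ut : WithLp 2 (E × lp (fun _ : ℕ => E) 2) := (prodEq (E := E)).symm (u, 0) with hut
    have hut_fst : ut.fst = u := rfl
    have hut_snd : ut.snd = 0 := rfl
    have hJtut : Jt J ut = ut := by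
      refine Et_ext ?_ ?_
      · rw [Jt_fst, hut_fst, hu]
      · rw [Jt_snd, hut_snd, neg_zero]
    obtain ⟨z, hzLt, hzKP⟩ := KP_surj_of_maximal (Jt J) (Jt_selfAdjoint J hJ) (Jt_sq J hJ2)
      Lt hLtpos hLtmax ut hJtut
    refine ⟨z.fst, ⟨z, hzLt, rfl⟩, ?_⟩
    rw [← KP_Jt_fst J z, hzKP]
    exact hut_fst
  exact ⟨L, hLpos, maximal_of_KP_surj J hJ hJ2 L hLpos hsurj, hLinv⟩
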